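/- Let 0 < α₂ < 1/2 and α₁ = 1 − 2α₂, and let η be the probability measure on ((√2−1)², (√2+1)²) with density √(((√2+1)² − x)(x − (√2−1)²))/(2πx) · (α₁ + α₂/x²). Then the moments m_k = ∫ x^k dη(x) satisfy: m₁ = 2 − 3α₂, m₂ = 6 − 11α₂, m₃ = 2(11 − 21α₂), and m₄ = 6(15 − 29α₂). -/

import Mathlib

open MeasureTheory Set

/-- The probability measure `η_{α₁,α₂}` on `((√2-1)², (√2+1)²)` with density
`√(((√2+1)² - x)(x - (√2-1)²))/(2πx) · (α₁ + α₂/x²)`, where `α₁ = 1 - 2α₂`. -/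
noncomputable def etaMeasure (α₂ : ℝ) : Measure ℝ :=
  MeasureTheory.volume.withDensity
    (fun x => ENNReal.ofReal
      ((Set.Ioo ((Real.sqrt 2 - 1) ^ 2) ((Real.sqrt 2 + 1) ^ 2)).indicator
        (fun x =>
          Real.sqrt (((Real.sqrt 2 + 1) ^ 2 - x) * (x - (Real.sqrt 2 - 1) ^ 2)) /
              (2 * Real.pi * x) * ((1 - 2 * α₂) + α₂ / x ^ 2)) x))


set_option maxHeartbeats 1000000 in
lemma eta_master (s : ℝ) (hs2 : s ^ 2 = 2) (hs0 : 0 < s) (g R R' : ℝ → ℝ) (C D : ℝ)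
    (hg : ContinuousOn g (Set.Icc ((s - 1) ^ 2) ((s + 1) ^ 2)))
    (hR : ∀ x ∈ Set.Ioo ((s - 1) ^ 2) ((s + 1) ^ 2), HasDerivAt R (R' x) x)
    (hRc : ContinuousOn R (Set.Icc ((s - 1) ^ 2) ((s + 1) ^ 2)))
    (heq : ∀ x ∈ Set.Ioo ((s - 1) ^ 2) ((s + 1) ^ 2),
      R' x * (6 * x - 1 - x ^ 2) + R x * (3 - x) + C + D / x
        = g x * Real.sqrt (6 * x - 1 - x ^ 2)) :
    ∫ x in ((s - 1) ^ 2)..((s + 1) ^ 2), g x = (C + D) * Real.pi := by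
  have hs1 : (1:ℝ) < s := by nlinarith
  have hs32 : s < 3/2 := by nlinarith
  set a : ℝ := (s - 1) ^ 2 with hadef
  set b : ℝ := (s + 1) ^ 2 with hbdef
  have ha0 : 0 < a := pow_pos (by linarith) 2
  have hab : a ≤ b := by nlinarith
  have hxpos : ∀ x ∈ Set.Icc a b, 0 < x := fun x hx => lt_of_lt_of_le ha0 hx.1
  have hqpos : ∀ x ∈ Set.Ioo a b, 0 < 6 * x - 1 - x ^ 2 := by
    intro x hx
    nlinarith [mul_pos (sub_pos.2 hx.2) (sub_pos.2 hx.1)]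
  set F : ℝ → ℝ := fun x => R x * Real.sqrt (6 * x - 1 - x ^ 2)
      + C * Real.arcsin ((x - 3) / (2 * s)) + D * Real.arcsin ((3 * x - 1) / (2 * s * x)) with hFdef
  have hFcont : ContinuousOn F (Set.Icc a b) := by
    apply ContinuousOn.add
    apply ContinuousOn.add
    · exact hRc.mul ((Real.continuous_sqrt.comp (by continuity)).continuousOn)
    · exact continuousOn_const.mul
        ((Real.continuous_arcsin.comp (by continuity)).continuousOn)
    · refine continuousOn_const.mul (Real.continuous_arcsin.comp_continuousOn ?_)
      exact ContinuousOn.div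
        ((by continuity : Continuous fun x : ℝ => 3 * x - 1).continuousOn)
        ((by continuity : Continuous fun x : ℝ => 2 * s * x).continuousOn)
        (fun x hx => by have := hxpos x hx; positivity)
  have hderiv : ∀ x ∈ Set.Ioo a b, HasDerivWithinAt F (g x) (Set.Ioi x) x := by
    intro x hx
    have hx0 : 0 < x := hxpos x ⟨hx.1.le, hx.2.le⟩
    have hq : 0 < 6 * x - 1 - x ^ 2 := hqpos x hx
    set t : ℝ := Real.sqrt (6 * x - 1 - x ^ 2) with htdef
    have ht2 : t ^ 2 = 6 * x - 1 - x ^ 2 := Real.sq_sqrt hq.le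
    have ht0 : 0 < t := Real.sqrt_pos.2 hq
    have hpoly : HasDerivAt (fun x : ℝ => 6 * x - 1 - x ^ 2) (6 - 2 * x) x := by
      have h1 := ((hasDerivAt_id x).const_mul 6).sub_const 1
      have h2 := hasDerivAt_pow 2 x
      exact (h1.sub h2).congr_deriv (by simp)
    have hsqrt : HasDerivAt (fun x : ℝ => Real.sqrt (6 * x - 1 - x ^ 2))
        ((6 - 2 * x) / (2 * t)) x := hpoly.sqrt hq.ne'
    have h8 : (2 * s) ^ 2 = 8 := by rw [mul_pow, hs2]; norm_num
    have h8x : (2 * s * x) ^ 2 = 8 * x ^ 2 := by rw [mul_pow, mul_pow, hs2]; ring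
    have hu1sq : ((x - 3) / (2 * s)) ^ 2 < 1 := by
      rw [div_pow, div_lt_one (by positivity)]
      nlinarith
    have hu1a : (x - 3) / (2 * s) ≠ -1 := by intro h; rw [h] at hu1sq; norm_num at hu1sq
    have hu1b : (x - 3) / (2 * s) ≠ 1 := by intro h; rw [h] at hu1sq; norm_num at hu1sq
    have hinner1 : HasDerivAt (fun x : ℝ => (x - 3) / (2 * s)) (1 / (2 * s)) x := by
      simpa using ((hasDerivAt_id x).sub_const 3).div_const (2 * s)
    have hs1sqrt : Real.sqrt (1 - ((x - 3) / (2 * s)) ^ 2) = t / (2 * s) := by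
      rw [show 1 - ((x - 3) / (2 * s)) ^ 2 = (t / (2 * s)) ^ 2 by
        rw [div_pow, div_pow, ht2, h8]; ring]
      exact Real.sqrt_sq (by positivity)
    have hA : HasDerivAt (fun x : ℝ => Real.arcsin ((x - 3) / (2 * s)))
        (1 / Real.sqrt (1 - ((x - 3) / (2 * s)) ^ 2) * (1 / (2 * s))) x := by
      exact (Real.hasDerivAt_arcsin hu1a hu1b).comp x hinner1
    have hu2sq : ((3 * x - 1) / (2 * s * x)) ^ 2 < 1 := by
      rw [div_pow, div_lt_one (by positivity), h8x]
      nlinarith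
    have hu2a : (3 * x - 1) / (2 * s * x) ≠ -1 := by intro h; rw [h] at hu2sq; norm_num at hu2sq
    have hu2b : (3 * x - 1) / (2 * s * x) ≠ 1 := by intro h; rw [h] at hu2sq; norm_num at hu2sq
    have hinner2 : HasDerivAt (fun x : ℝ => (3 * x - 1) / (2 * s * x))
        ((3 * (2 * s * x) - (3 * x - 1) * (2 * s)) / (2 * s * x) ^ 2) x := by
      have := (((hasDerivAt_id x).const_mul 3).sub_const 1).div
        ((hasDerivAt_id x).const_mul (2 * s)) (by positivity : (2 * s * id x) ≠ 0)
      exact this.congr_deriv (by simp only [id, mul_one])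
    have hs2sqrt : Real.sqrt (1 - ((3 * x - 1) / (2 * s * x)) ^ 2) = t / (2 * s * x) := by
      rw [show 1 - ((3 * x - 1) / (2 * s * x)) ^ 2 = (t / (2 * s * x)) ^ 2 by
        rw [div_pow, div_pow, ht2, h8x]; field_simp; ring]
      exact Real.sqrt_sq (by positivity)
    have hB : HasDerivAt (fun x : ℝ => Real.arcsin ((3 * x - 1) / (2 * s * x)))
        (1 / Real.sqrt (1 - ((3 * x - 1) / (2 * s * x)) ^ 2)
          * ((3 * (2 * s * x) - (3 * x - 1) * (2 * s)) / (2 * s * x) ^ 2)) x := by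
      exact (Real.hasDerivAt_arcsin hu2a hu2b).comp x hinner2
    rw [hs1sqrt] at hA
    rw [hs2sqrt] at hB
    have hF : HasDerivAt F
        (R' x * t + R x * ((6 - 2 * x) / (2 * t))
          + C * (1 / (t / (2 * s)) * (1 / (2 * s)))
          + D * (1 / (t / (2 * s * x))
              * ((3 * (2 * s * x) - (3 * x - 1) * (2 * s)) / (2 * s * x) ^ 2))) x :=
      (((hR x hx).mul hsqrt).add (hA.const_mul C)).add (hB.const_mul D)
    refine HasDerivAt.hasDerivWithinAt ?_
    refine hF.congr_deriv ?_
    have hgx : g x = (R' x * (6 * x - 1 - x ^ 2) + R x * (3 - x) + C + D / x) / t := by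
      rw [heq x hx]
      field_simp
      rw [htdef]
    rw [hgx, ← ht2]
    field_simp
    ring
  have hint : IntervalIntegrable g volume a b :=
    ContinuousOn.intervalIntegrable (by rwa [Set.uIcc_of_le hab])
  rw [intervalIntegral.integral_eq_sub_of_hasDeriv_right_of_le hab hFcont hderiv hint]
  have hqa : 6 * a - 1 - a ^ 2 = 0 := by linear_combination (-(s^2) + 4*s - 2) * hs2
  have hqb : 6 * b - 1 - b ^ 2 = 0 := by linear_combination (-(s^2) - 4*s - 2) * hs2
  have hAb : (b - 3) / (2 * s) = 1 := by
    rw [div_eq_one_iff_eq (by positivity)]; linear_combination hs2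
  have hAa : (a - 3) / (2 * s) = -1 := by
    rw [div_eq_iff (by positivity)]; linear_combination hs2
  have hBb : (3 * b - 1) / (2 * s * b) = 1 := by
    rw [div_eq_one_iff_eq (by positivity)]; linear_combination (-2*s - 1) * hs2
  have hBa : (3 * a - 1) / (2 * s * a) = -1 := by
    rw [div_eq_iff (by positivity)]; linear_combination (2*s - 1) * hs2
  simp only [hFdef, hqa, hqb, hAb, hAa, hBb, hBa, Real.sqrt_zero, mul_zero,
    Real.arcsin_one, Real.arcsin_neg_one]
  ring

lemma hasDerivAt_aux (a0 a1 a2 a3 a4 am : ℝ) (x : ℝ) (hx : x ≠ 0) :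
    HasDerivAt (fun x : ℝ => (a0 + a1*x + a2*x^2 + a3*x^3 + a4*x^4 + am/x) / (2*Real.pi))
      ((a1 + 2*a2*x + 3*a3*x^2 + 4*a4*x^3 - am/x^2) / (2*Real.pi)) x := by
  have h : HasDerivAt (fun x : ℝ => a0 + a1*x + a2*x^2 + a3*x^3 + a4*x^4 + am/x)
      (a1 + 2*a2*x + 3*a3*x^2 + 4*a4*x^3 - am/x^2) x := by
    have h1 := (hasDerivAt_id x).const_mul a1
    have h2 := (hasDerivAt_pow 2 x).const_mul a2
    have h3 := (hasDerivAt_pow 3 x).const_mul a3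
    have h4 := (hasDerivAt_pow 4 x).const_mul a4
    have h5 := (hasDerivAt_inv hx).const_mul am
    have htot := ((((((hasDerivAt_const x a0).add h1).add h2).add h3).add h4).add h5)
    refine htot.congr_deriv ?_
    push_cast
    field_simp
    ring
  exact h.div_const _

lemma eta_red (β : ℝ) (h0 : 0 < β) (h12 : β < 1/2) (k : ℕ) :
    ∫ x, x ^ k ∂(etaMeasure β) =
    ∫ x in ((Real.sqrt 2 - 1) ^ 2)..((Real.sqrt 2 + 1) ^ 2),
      (Real.sqrt (((Real.sqrt 2 + 1) ^ 2 - x) * (x - (Real.sqrt 2 - 1) ^ 2)) / (2 * Real.pi * x)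
        * ((1 - 2 * β) + β / x ^ 2)) * x ^ k := by
  have hs2 : Real.sqrt 2 ^ 2 = 2 := Real.sq_sqrt (by norm_num)
  have hs1 : (1:ℝ) < Real.sqrt 2 := by nlinarith [Real.sqrt_nonneg 2]
  have hab : ((Real.sqrt 2 - 1) ^ 2) ≤ ((Real.sqrt 2 + 1) ^ 2) := by nlinarith
  have ha0 : (0:ℝ) < (Real.sqrt 2 - 1) ^ 2 := pow_pos (by linarith) 2
  set inner : ℝ → ℝ := fun x =>
      Real.sqrt (((Real.sqrt 2 + 1) ^ 2 - x) * (x - (Real.sqrt 2 - 1) ^ 2)) /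
        (2 * Real.pi * x) * ((1 - 2 * β) + β / x ^ 2) with hinnerdef
  have hinner_meas : Measurable inner := by fun_prop
  set ind : ℝ → ℝ := (Set.Ioo ((Real.sqrt 2 - 1) ^ 2) ((Real.sqrt 2 + 1) ^ 2)).indicator inner
    with hinddef
  have hind_meas : Measurable ind := hinner_meas.indicator measurableSet_Ioo
  have hmeas : Measurable fun x => (ind x).toNNReal := measurable_real_toNNReal.comp hind_meas
  have hnn : ∀ x ∈ Set.Ioo ((Real.sqrt 2 - 1) ^ 2) ((Real.sqrt 2 + 1) ^ 2), 0 ≤ inner x := by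
    intro x hx
    have hx0 : 0 < x := lt_trans ha0 hx.1
    have hb : 0 < 1 - 2 * β := by linarith
    have : 0 ≤ (1 - 2 * β) + β / x ^ 2 := by positivity
    exact mul_nonneg (div_nonneg (Real.sqrt_nonneg _) (by positivity)) this
  rw [etaMeasure]
  rw [show (fun x => ENNReal.ofReal (ind x))
      = fun x => (((fun x => (ind x).toNNReal) x : NNReal) : ENNReal) from rfl]
  rw [integral_withDensity_eq_integral_smul hmeas]
  rw [show (fun x => (fun x => (ind x).toNNReal) x • x ^ k)
      = (Set.Ioo ((Real.sqrt 2 - 1) ^ 2) ((Real.sqrt 2 + 1) ^ 2)).indicator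
          (fun x => inner x * x ^ k) from ?_]
  · rw [MeasureTheory.integral_indicator measurableSet_Ioo,
      ← MeasureTheory.integral_Ioc_eq_integral_Ioo,
      ← intervalIntegral.integral_of_le hab]
  · funext x
    by_cases hx : x ∈ Set.Ioo ((Real.sqrt 2 - 1) ^ 2) ((Real.sqrt 2 + 1) ^ 2)
    · simp only [hinddef, Set.indicator_of_mem hx, NNReal.smul_def,
        Real.coe_toNNReal _ (hnn x hx), smul_eq_mul]
    · simp only [hinddef, Set.indicator_of_notMem hx]
      simp

lemma eta_moment (β : ℝ) (h0 : 0 < β) (h12 : β < 1/2) (k : ℕ) (a0 a1 a2 a3 a4 am C D : ℝ)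
    (hpoly : ∀ x : ℝ, x ≠ 0 →
      (a1 + 2*a2*x + 3*a3*x^2 + 4*a4*x^3 - am/x^2) / (2*Real.pi) * (6*x - 1 - x^2)
        + (a0 + a1*x + a2*x^2 + a3*x^3 + a4*x^4 + am/x) / (2*Real.pi) * (3 - x)
        + C / (2*Real.pi) + (D / (2*Real.pi)) / x
      = (6*x - 1 - x^2) * ((1 - 2*β) + β/x^2) * x ^ k / (2*Real.pi*x)) :
    ∫ x, x ^ k ∂(etaMeasure β) = (C + D) / 2 := by
  have hs2 : Real.sqrt 2 ^ 2 = 2 := Real.sq_sqrt (by norm_num)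
  have hs0 : (0:ℝ) < Real.sqrt 2 := Real.sqrt_pos.2 (by norm_num)
  have hs1 : (1:ℝ) < Real.sqrt 2 := by nlinarith
  have ha0 : (0:ℝ) < (Real.sqrt 2 - 1) ^ 2 := pow_pos (by linarith) 2
  have hxpos : ∀ x ∈ Set.Icc ((Real.sqrt 2 - 1) ^ 2) ((Real.sqrt 2 + 1) ^ 2), (0:ℝ) < x :=
    fun x hx => lt_of_lt_of_le ha0 hx.1
  rw [eta_red β h0 h12 k]
  have hmain := eta_master (Real.sqrt 2) hs2 hs0
      (fun x => (Real.sqrt (((Real.sqrt 2 + 1) ^ 2 - x) * (x - (Real.sqrt 2 - 1) ^ 2))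
          / (2 * Real.pi * x) * ((1 - 2 * β) + β / x ^ 2)) * x ^ k)
      (fun x => (a0 + a1*x + a2*x^2 + a3*x^3 + a4*x^4 + am/x) / (2*Real.pi))
      (fun x => (a1 + 2*a2*x + 3*a3*x^2 + 4*a4*x^3 - am/x^2) / (2*Real.pi))
      (C / (2*Real.pi)) (D / (2*Real.pi)) ?_ ?_ ?_ ?_
  · rw [hmain]; field_simp
  · -- continuity of g
    refine ContinuousOn.mul (ContinuousOn.mul ?_ ?_) ?_
    · exact ContinuousOn.div
        ((Real.continuous_sqrt.comp (by continuity)).continuousOn)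
        ((by continuity : Continuous fun x : ℝ => 2 * Real.pi * x).continuousOn)
        (fun x hx => by have := hxpos x hx; positivity)
    · exact continuousOn_const.add (continuousOn_const.div
        ((by continuity : Continuous fun x : ℝ => x ^ 2).continuousOn)
        (fun x hx => by have := hxpos x hx; positivity))
    · exact (continuous_pow k).continuousOn
  · -- hR
    exact fun x hx => hasDerivAt_aux a0 a1 a2 a3 a4 am x (hxpos x ⟨hx.1.le, hx.2.le⟩).ne'
  · -- hRc
    refine ContinuousOn.div ?_ continuousOn_const (fun x hx => by positivity)
    refine ContinuousOn.add ?_ (continuousOn_const.div continuous_id.continuousOn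
      (fun x hx => (hxpos x hx).ne'))
    exact (by continuity : Continuous fun x : ℝ =>
      a0 + a1*x + a2*x^2 + a3*x^3 + a4*x^4).continuousOn
  · -- heq
    intro x hx
    have hx0 : 0 < x := hxpos x ⟨hx.1.le, hx.2.le⟩
    have hqx : ((Real.sqrt 2 + 1) ^ 2 - x) * (x - (Real.sqrt 2 - 1) ^ 2) = 6*x - 1 - x^2 := by
      linear_combination (2*x - Real.sqrt 2 ^ 2) * hs2
    rw [hqx]
    set t := Real.sqrt (6*x - 1 - x^2) with htdef
    have hq0 : 0 ≤ 6*x - 1 - x^2 := by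
      nlinarith [mul_pos (sub_pos.2 hx.2) (sub_pos.2 hx.1)]
    have ht2 : t ^ 2 = 6*x - 1 - x^2 := Real.sq_sqrt hq0
    linear_combination hpoly x hx0.ne'
      - (((1 - 2*β) + β/x^2) * x ^ k / (2*Real.pi*x)) * ht2

/-- For `0 < α₂ < 1/2` and `α₁ = 1 - 2α₂`, the moments of `η` satisfy
`m₁ = 2 - 3α₂`, `m₂ = 6 - 11α₂`, `m₃ = 2(11 - 21α₂)`, `m₄ = 6(15 - 29α₂)`. -/
theorem eta_moments (α₂ : ℝ) (h0 : 0 < α₂) (h12 : α₂ < 1 / 2) :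
    (∫ x : ℝ, x ∂(etaMeasure α₂)) = 2 - 3 * α₂ ∧
    (∫ x : ℝ, x ^ 2 ∂(etaMeasure α₂)) = 6 - 11 * α₂ ∧
    (∫ x : ℝ, x ^ 3 ∂(etaMeasure α₂)) = 2 * (11 - 21 * α₂) ∧
    (∫ x : ℝ, x ^ 4 ∂(etaMeasure α₂)) = 6 * (15 - 29 * α₂) := by
  refine ⟨?_, ?_, ?_, ?_⟩
  · have h := eta_moment α₂ h0 h12 1 (-3*(1-2*α₂)/2) ((1-2*α₂)/2) 0 0 0 (-α₂)
      (4*(1-2*α₂) - α₂) (3*α₂) (fun x hx => by field_simp; ring)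
    have h1 : (∫ x : ℝ, x ∂(etaMeasure α₂)) = ∫ x : ℝ, x ^ 1 ∂(etaMeasure α₂) := by
      simp
    rw [h1, h]; ring
  · have h := eta_moment α₂ h0 h12 2 (-25*(1-2*α₂)/6 + α₂) (-(1-2*α₂)/2) ((1-2*α₂)/3) 0 0 0
      (12*(1-2*α₂) + 3*α₂) (-α₂) (fun x hx => by field_simp; ring)
    rw [h]; ring
  · have h := eta_moment α₂ h0 h12 3 (-61*(1-2*α₂)/4 - 3*α₂/2) (-7*(1-2*α₂)/4 + α₂/2)
      (-(1-2*α₂)/4) ((1-2*α₂)/4) 0 0 (44*(1-2*α₂) + 4*α₂) 0 (fun x hx => by field_simp; ring)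
    rw [h]; ring
  · have h := eta_moment α₂ h0 h12 4 (-3743*(1-2*α₂)/60 - 25*α₂/6) (-143*(1-2*α₂)/20 - α₂/2)
      (-59*(1-2*α₂)/60 + α₂/3) (-3*(1-2*α₂)/20) ((1-2*α₂)/5) 0
      (180*(1-2*α₂) + 12*α₂) 0 (fun x hx => by field_simp; ring)
    rw [h]; ring
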